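/- Let γ ∈ [0,1) and p ∈ (0,1), and define the pure input states χ₊(p) = [[1−p, √(p(1−p))], [√(p(1−p)), p]] and χ₋(p) = [[1−p, −√(p(1−p))], [−√(p(1−p)), p]]. Then for every two-outcome POVM (Λ₀, Λ₁) on ℂ², the average success probability satisfies (1/2)·Re Tr(Λ₀ · N_γ(χ₊(p))) + (1/2)·Re Tr(Λ₁ · N_γ(χ₋(p))) ≤ 1/2 + √((1−γ)·p·(1−p)); and if p ≠ 1/2, then 1/2 + √((1−γ)·p·(1−p)) < (1 + √(1−γ))/2, so the Holevo-χ-capacity-achieving input states are strictly suboptimal for the average success probability of the single-use ADC. -/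

import Mathlib

open Matrix Complex
open scoped ComplexOrder

/-- Kraus operator `K₀` of the qubit amplitude damping channel. -/
noncomputable def K₀ (γ : ℝ) : Matrix (Fin 2) (Fin 2) ℂ :=
  !![1, 0; 0, (Real.sqrt (1 - γ) : ℂ)]

/-- Kraus operator `K₁` of the qubit amplitude damping channel. -/
noncomputable def K₁ (γ : ℝ) : Matrix (Fin 2) (Fin 2) ℂ :=
  !![0, (Real.sqrt γ : ℂ); 0, 0]

/-- The qubit amplitude damping channel with damping parameter `γ`. -/
noncomputable def ADC (γ : ℝ) (ρ : Matrix (Fin 2) (Fin 2) ℂ) : Matrix (Fin 2) (Fin 2) ℂ :=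
  K₀ γ * ρ * (K₀ γ)ᴴ + K₁ γ * ρ * (K₁ γ)ᴴ

/-- The state `ρ₊ = |+⟩⟨+|`. -/
noncomputable def ρPlus : Matrix (Fin 2) (Fin 2) ℂ := (1/2 : ℂ) • !![1, 1; 1, 1]

/-- The state `ρ₋ = |−⟩⟨−|`. -/
noncomputable def ρMinus : Matrix (Fin 2) (Fin 2) ℂ := (1/2 : ℂ) • !![1, -1; -1, 1]

/-- The Holevo-χ-capacity–achieving pure input state `χ₊(p)`. -/
noncomputable def χPlus (p : ℝ) : Matrix (Fin 2) (Fin 2) ℂ :=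
  !![(1 - p : ℂ), (Real.sqrt (p * (1 - p)) : ℂ);
     (Real.sqrt (p * (1 - p)) : ℂ), (p : ℂ)]

/-- The Holevo-χ-capacity–achieving pure input state `χ₋(p)`. -/
noncomputable def χMinus (p : ℝ) : Matrix (Fin 2) (Fin 2) ℂ :=
  !![(1 - p : ℂ), (-(Real.sqrt (p * (1 - p))) : ℂ);
     (-(Real.sqrt (p * (1 - p))) : ℂ), (p : ℂ)]

/-- For `γ ∈ [0,1)` and `p ∈ (0,1)`, with inputs `χ₊(p)`, `χ₋(p)`, every
two-outcome POVM has average success probability at most `1/2 + √((1−γ)p(1−p))`; moreover,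
if `p ≠ 1/2` this value is strictly below the optimum `(1 + √(1−γ))/2`, so the
χ-capacity-achieving states are strictly suboptimal. -/
private lemma trace_plus (γ p : ℝ) (hγ0 : 0 ≤ γ) (hγ1 : γ < 1)
    (M : Matrix (Fin 2) (Fin 2) ℂ) :
    (M * ADC γ (χPlus p)).trace.re =
      (M 0 0).re * (1 - p + γ * p)
      + ((M 0 1).re + (M 1 0).re) * (Real.sqrt (1-γ) * Real.sqrt (p*(1-p)))
      + (M 1 1).re * ((1-γ) * p) := by
  simp [ADC, K₀, K₁, χPlus, Matrix.trace_fin_two, Matrix.mul_apply, Fin.sum_univ_two,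
    Matrix.conjTranspose_apply, Matrix.vecMul, dotProduct, Complex.add_re,
    Complex.mul_re, Complex.mul_im, Complex.ofReal_re, Complex.ofReal_im, Complex.conj_ofReal]
  ring_nf
  simp only [Real.sq_sqrt hγ0, Real.sq_sqrt (by linarith : (0:ℝ) ≤ 1-γ)]
  ring

private lemma trace_minus (γ p : ℝ) (hγ0 : 0 ≤ γ) (hγ1 : γ < 1)
    (M : Matrix (Fin 2) (Fin 2) ℂ) :
    (M * ADC γ (χMinus p)).trace.re =
      (M 0 0).re * (1 - p + γ * p)
      - ((M 0 1).re + (M 1 0).re) * (Real.sqrt (1-γ) * Real.sqrt (p*(1-p)))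
      + (M 1 1).re * ((1-γ) * p) := by
  simp [ADC, K₀, K₁, χMinus, Matrix.trace_fin_two, Matrix.mul_apply, Fin.sum_univ_two,
    Matrix.conjTranspose_apply, Matrix.vecMul, dotProduct, Complex.add_re,
    Complex.mul_re, Complex.mul_im, Complex.ofReal_re, Complex.ofReal_im, Complex.conj_ofReal]
  ring_nf
  simp only [Real.sq_sqrt hγ0, Real.sq_sqrt (by linarith : (0:ℝ) ≤ 1-γ)]
  ring

theorem stmt4 (γ : ℝ) (hγ0 : 0 ≤ γ) (hγ1 : γ < 1)
    (p : ℝ) (hp0 : 0 < p) (hp1 : p < 1) :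
    (∀ Λ₀ Λ₁ : Matrix (Fin 2) (Fin 2) ℂ,
      Λ₀.PosSemidef → Λ₁.PosSemidef → Λ₀ + Λ₁ = 1 →
      (1/2) * (Λ₀ * ADC γ (χPlus p)).trace.re + (1/2) * (Λ₁ * ADC γ (χMinus p)).trace.re
        ≤ 1/2 + Real.sqrt ((1 - γ) * p * (1 - p))) ∧
    (p ≠ 1/2 →
      1/2 + Real.sqrt ((1 - γ) * p * (1 - p)) < (1 + Real.sqrt (1 - γ)) / 2) := by
  constructor
  · intro Λ₀ Λ₁ hΛ₀ hΛ₁ hsum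
    have hΛ : Λ₁ = 1 - Λ₀ := by rw [← hsum]; abel
    subst hΛ
    set a := (Λ₀ 0 0).re
    set b := (Λ₀ 0 1).re
    set b' := (Λ₀ 1 0).re
    set a' := (Λ₀ 1 1).re
    have h1 : 0 ≤ a - b - b' + a' := by
      have h2 := hΛ₀.dotProduct_mulVec_nonneg ![1, -1]
      rw [Complex.le_def] at h2
      have := h2.1
      simp [dotProduct, Matrix.mulVec, Fin.sum_univ_two, Complex.add_re,
        Complex.mul_re, Complex.mul_im, Complex.add_im] at this
      simp only [a, b, b', a']
      linarith
    have h2 : b + b' ≤ 2 - a - a' := by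
      have h2 := hΛ₁.dotProduct_mulVec_nonneg ![1, 1]
      rw [Complex.le_def] at h2
      have := h2.1
      simp [dotProduct, Matrix.mulVec, Fin.sum_univ_two, Matrix.sub_apply,
        Matrix.one_apply, Complex.add_re, Complex.sub_re, Complex.mul_re,
        Complex.mul_im, Complex.add_im] at this
      simp only [a, b, b', a']
      linarith
    have hcs : Real.sqrt ((1 - γ) * p * (1 - p))
        = Real.sqrt (1-γ) * Real.sqrt (p*(1-p)) := by
      rw [mul_assoc, Real.sqrt_mul (by linarith : (0:ℝ) ≤ 1 - γ)]
    have hcsnn : 0 ≤ Real.sqrt (1-γ) * Real.sqrt (p*(1-p)) :=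
      mul_nonneg (Real.sqrt_nonneg _) (Real.sqrt_nonneg _)
    rw [trace_plus γ p hγ0 hγ1, trace_minus γ p hγ0 hγ1, hcs]
    have e00 : ((1 - Λ₀) 0 0).re = 1 - a := by
      simp [Matrix.sub_apply, Matrix.one_apply, Complex.sub_re, a]
    have e01 : ((1 - Λ₀) 0 1).re = -b := by
      simp [Matrix.sub_apply, Matrix.one_apply, Complex.sub_re, b]
    have e10 : ((1 - Λ₀) 1 0).re = -b' := by
      simp [Matrix.sub_apply, Matrix.one_apply, Complex.sub_re, b']
    have e11 : ((1 - Λ₀) 1 1).re = 1 - a' := by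
      simp [Matrix.sub_apply, Matrix.one_apply, Complex.sub_re, a']
    rw [e00, e01, e10, e11]
    have key : 0 ≤ (Real.sqrt (1-γ) * Real.sqrt (p*(1-p))) * (1 - (b + b')) :=
      mul_nonneg hcsnn (by linarith)
    nlinarith [key]
  · intro hp
    have h1γ : (0:ℝ) < 1 - γ := by linarith
    have hs1 : Real.sqrt (p * (1 - p)) < 1/2 := by
      have hlt : p * (1 - p) < 1/4 := by 
        have hne : p - 1/2 ≠ 0 := sub_ne_zero.mpr hp
        have hpos : 0 < (p - 1/2)^2 := by positivity
        nlinarith [hpos]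
      have := Real.sqrt_lt_sqrt (mul_nonneg hp0.le (by linarith)) hlt
      calc Real.sqrt (p * (1 - p)) < Real.sqrt (1/4) := this
        _ = 1/2 := by rw [show (1/4 : ℝ) = (1/2)^2 by norm_num, Real.sqrt_sq (by norm_num)]
    have hcs : Real.sqrt ((1 - γ) * p * (1 - p))
        = Real.sqrt (1-γ) * Real.sqrt (p*(1-p)) := by
      rw [mul_assoc, Real.sqrt_mul (by linarith : (0:ℝ) ≤ 1 - γ)]
    have hcpos : 0 < Real.sqrt (1-γ) := Real.sqrt_pos.mpr h1γ
    rw [hcs]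
    nlinarith [mul_lt_mul_of_pos_left hs1 hcpos]
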